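/- arXiv:1606.09008 — 4 statements merged into one kernel-verified Lean document; each statement's English description precedes it below -/
import Mathlib

section
/- Let U ⊆ ℂⁿ be open, let f, g be holomorphic on U, and let x₀ ∈ U with f(x₀) = 0 and g(x₀) ≠ 0. Assume a Łojasiewicz inequality holds near x₀: there are c > 0, θ ∈ (0,1) and a neighborhood W of x₀ with c·|f(z)|^θ ≤ ‖∇f(z)‖ for all z ∈ W. Fix μ ∈ ℂ with |μ| = 1 and set n_μ(z) = μ·g(z)·conj(∇f(z)) + conj(μ)·f(z)·conj(∇g(z)) (a normal vector to the fibre of z ↦ f(z)·conj(g(z)) at z). Then for every sequence zₙ → x₀ with f(zₙ) ≠ 0 and ∇f(zₙ) ≠ 0: n_μ(zₙ) ≠ 0 for all large n, and n_μ(zₙ)/‖n_μ(zₙ)‖ − μ·g(zₙ)·conj(∇f(zₙ))/‖g(zₙ)·∇f(zₙ)‖ → 0 as n → ∞. (Analytic core of Step 1 in the proof of Theorem 3.1: near points of Sing f outside {g = 0}, the limits of normal directions to the fibres of f·ḡ coincide with the limits of normal directions to the fibres of the holomorphic function f, so the Thom irregularity locus of f·ḡ is contained in {f = g = 0}.) 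-/
open Complex Filter Function Metric

noncomputable section

/-- `ℂⁿ` with its Euclidean (Hermitian) norm. -/
abbrev Cn (n : ℕ) := EuclideanSpace ℂ (Fin n)

/-- Complex gradient `∇f(z) = (∂f/∂z₁,…,∂f/∂zₙ)(z)` of a holomorphic function `f`. -/
def gradC {n : ℕ} (f : Cn n → ℂ) (z : Cn n) : Cn n :=
  WithLp.toLp 2 (fun k => fderiv ℂ f z (EuclideanSpace.single k 1))

/-- Componentwise complex conjugate of a vector in `ℂⁿ`. -/
def conjVec {n : ℕ} (v : Cn n) : Cn n := WithLp.toLp 2 (fun k => starRingEnd ℂ (v k))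

lemma conjVec_norm {n : ℕ} (v : Cn n) : ‖conjVec v‖ = ‖v‖ := by
  simp [conjVec, EuclideanSpace.norm_eq]

/-- Direction comparison: if `u = a + b` then the unit vectors of `u` and `a` differ by at
most `2‖b‖/‖u‖`. -/
lemma dir_bound {E : Type*} [NormedAddCommGroup E] [NormedSpace ℝ E]
    (a b : E) (ha : a ≠ 0) (hu : a + b ≠ 0) :
    ‖‖a + b‖⁻¹ • (a + b) - ‖a‖⁻¹ • a‖ ≤ 2 * ‖b‖ / ‖a + b‖ := by
  have hna : (0:ℝ) < ‖a‖ := norm_pos_iff.mpr ha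
  have hnu : (0:ℝ) < ‖a + b‖ := norm_pos_iff.mpr hu
  have key : ‖a + b‖⁻¹ • (a + b) - ‖a‖⁻¹ • a
      = ‖a + b‖⁻¹ • b + (‖a + b‖⁻¹ - ‖a‖⁻¹) • a := by module
  rw [key]
  have h2 : |‖a‖ - ‖a + b‖| ≤ ‖b‖ := by
    simpa using abs_norm_sub_norm_le a (a + b)
  have h1 : ‖(‖a + b‖⁻¹ - ‖a‖⁻¹) • a‖ ≤ ‖b‖ / ‖a + b‖ := by
    rw [norm_smul, Real.norm_eq_abs]
    have heq : ‖a + b‖⁻¹ - ‖a‖⁻¹ = (‖a‖ - ‖a + b‖) / (‖a + b‖ * ‖a‖) := by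
      field_simp
    rw [heq, abs_div, abs_of_pos (mul_pos hnu hna)]
    have e2 : |‖a‖ - ‖a + b‖| / (‖a + b‖ * ‖a‖) * ‖a‖ = |‖a‖ - ‖a + b‖| / ‖a + b‖ := by
      field_simp
    rw [e2]
    gcongr
  have h0 : ‖‖a + b‖⁻¹ • b‖ = ‖b‖ / ‖a + b‖ := by
    rw [norm_smul, Real.norm_eq_abs, abs_of_pos (inv_pos.mpr hnu), inv_mul_eq_div]
  calc ‖‖a + b‖⁻¹ • b + (‖a + b‖⁻¹ - ‖a‖⁻¹) • a‖
      ≤ ‖‖a + b‖⁻¹ • b‖ + ‖(‖a + b‖⁻¹ - ‖a‖⁻¹) • a‖ := norm_add_le _ _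
    _ ≤ ‖b‖ / ‖a + b‖ + ‖b‖ / ‖a + b‖ := by rw [h0]; linarith
    _ = 2 * ‖b‖ / ‖a + b‖ := by ring

/-- Local bound on the gradient of a holomorphic function, via Cauchy estimates in each
coordinate direction. -/
lemma grad_bound {n : ℕ} {U : Set (Cn n)} (hU : IsOpen U) {g : Cn n → ℂ}
    (hg : DifferentiableOn ℂ g U) {x₀ : Cn n} (hx₀ : x₀ ∈ U) :
    ∃ r M : ℝ, 0 < r ∧ 0 ≤ M ∧ ∀ z ∈ Metric.ball x₀ r, ‖gradC g z‖ ≤ M := by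
  obtain ⟨ε, hε, hball⟩ := Metric.isOpen_iff.mp hU x₀ hx₀
  set r := ε / 3 with hrdef
  have hr : 0 < r := by positivity
  have hsub : Metric.closedBall x₀ (2 * r) ⊆ U := by
    intro y hy
    apply hball
    rw [Metric.mem_ball]
    rw [Metric.mem_closedBall] at hy
    linarith
  have hgc : ContinuousOn g (Metric.closedBall x₀ (2 * r)) := hg.continuousOn.mono hsub
  obtain ⟨C, hC⟩ := (isCompact_closedBall x₀ (2 * r)).exists_bound_of_continuousOn hgc
  have hC0 : 0 ≤ C := le_trans (norm_nonneg _) (hC x₀ (by simp [Metric.mem_closedBall]; positivity))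
  refine ⟨r, Real.sqrt (n * (C / r) ^ 2), hr, Real.sqrt_nonneg _, ?_⟩
  intro z hz
  rw [Metric.mem_ball] at hz
  have hcomp : ∀ k, ‖gradC g z k‖ ≤ C / r := by
    intro k
    set v : Cn n := EuclideanSpace.single k 1 with hv
    have hv1 : ‖v‖ = 1 := by simp [hv]
    set h : ℂ → ℂ := fun t => g (z + t • v) with hdefh
    have hmem : ∀ t : ℂ, t ∈ Metric.closedBall (0:ℂ) r →
        z + t • v ∈ Metric.closedBall x₀ (2 * r) := by
      intro t ht
      rw [Metric.mem_closedBall, dist_eq_norm] at ht ⊢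
      have : z + t • v - x₀ = (z - x₀) + t • v := by abel
      rw [this]
      calc ‖(z - x₀) + t • v‖ ≤ ‖z - x₀‖ + ‖t • v‖ := norm_add_le _ _
        _ ≤ r + r := by
            rw [norm_smul, hv1, mul_one]
            have := hz
            rw [dist_eq_norm] at this
            simp only [sub_zero] at ht
            linarith
        _ = 2 * r := by ring
    have hdiffA : ∀ t : ℂ, DifferentiableAt ℂ (fun s : ℂ => z + s • v) t := by
      intro t
      exact (differentiableAt_id.smul_const v).const_add z
    have hd : DifferentiableOn ℂ h (Metric.closedBall 0 r) := by
      intro t ht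
      have hgAt : DifferentiableAt ℂ g (z + t • v) :=
        hg.differentiableAt (hU.mem_nhds (hsub (hmem t ht)))
      exact (hgAt.comp t (hdiffA t)).differentiableWithinAt
    have hdcl : DiffContOnCl ℂ h (Metric.ball 0 r) := by
      apply DifferentiableOn.diffContOnCl
      rwa [closure_ball (0:ℂ) hr.ne']
    have hDeriv : HasDerivAt h (gradC g z k) 0 := by
      have hzmem : z ∈ Metric.closedBall x₀ (2 * r) := by
        have := hmem 0 (by simp [hr.le]); simpa using this
      have hgAt : DifferentiableAt ℂ g z :=
        hg.differentiableAt (hU.mem_nhds (hsub hzmem))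
      have hA : HasDerivAt (fun t : ℂ => z + t • v) v 0 := by
        simpa using ((hasDerivAt_id (0:ℂ)).smul_const v).const_add z
      have hgAt' : HasFDerivAt g (fderiv ℂ g z) (z + (0:ℂ) • v) := by
        simpa using hgAt.hasFDerivAt
      have := hgAt'.comp_hasDerivAt 0 hA
      exact this
    have hbd := Complex.norm_deriv_le_of_forall_mem_sphere_norm_le hr hdcl
      (fun t ht => hC _ (hmem t (Metric.sphere_subset_closedBall ht)))
    rwa [hDeriv.deriv] at hbd
  rw [EuclideanSpace.norm_eq]
  apply Real.sqrt_le_sqrt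
  calc (∑ k, ‖gradC g z k‖ ^ 2) ≤ ∑ _k : Fin n, (C / r) ^ 2 := by
        apply Finset.sum_le_sum
        intro k _
        exact pow_le_pow_left₀ (norm_nonneg _) (hcomp k) 2
    _ = n * (C / r) ^ 2 := by simp [Finset.sum_const, mul_comm]

/-- **Analytic core of Step 1 of the proof of Theorem 3.1.**  Let `f, g` be holomorphic on
an open set `U ⊆ ℂⁿ`, `x₀ ∈ U` with `f x₀ = 0`, `g x₀ ≠ 0`, and suppose the Łojasiewicz
inequality `c·|f|^θ ≤ ‖∇f‖` holds on a neighbourhood `W` of `x₀` with `θ ∈ (0,1)`, `c > 0`.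
For `|μ| = 1` put `n_μ(z) = μ·g(z)·conj(∇f(z)) + conj(μ)·f(z)·conj(∇g(z))`, a normal vector
to the fibre of `f·ḡ` at `z`.  Then along any sequence `zₘ → x₀` with `f(zₘ) ≠ 0` and
`∇f(zₘ) ≠ 0`, eventually `n_μ(zₘ) ≠ 0`, and the normalized direction of `n_μ(zₘ)` becomes
asymptotic to the direction of `μ·g(zₘ)·conj(∇f(zₘ))`, i.e. to that of `conj(∇f(zₘ))`. -/
theorem normal_directions_fgbar_along_sing_f
    {n : ℕ} (U : Set (Cn n)) (hU : IsOpen U)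
    (f g : Cn n → ℂ) (hf : DifferentiableOn ℂ f U) (hg : DifferentiableOn ℂ g U)
    (x₀ : Cn n) (hx₀ : x₀ ∈ U) (hfx₀ : f x₀ = 0) (hgx₀ : g x₀ ≠ 0)
    (c θ : ℝ) (hc : 0 < c) (hθ : θ ∈ Set.Ioo (0 : ℝ) 1)
    (W : Set (Cn n)) (hW : W ∈ nhds x₀) (hWU : W ⊆ U)
    (hloja : ∀ z ∈ W, c * ‖f z‖ ^ θ ≤ ‖gradC f z‖)
    (μ : ℂ) (hμ : ‖μ‖ = 1)
    (nμ : Cn n → Cn n)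
    (hnμ : ∀ z, nμ z = (μ * g z) • conjVec (gradC f z)
                      + ((starRingEnd ℂ μ) * f z) • conjVec (gradC g z))
    (zs : ℕ → Cn n) (hzs : Tendsto zs atTop (nhds x₀))
    (hzU : ∀ m, zs m ∈ U) (hzf : ∀ m, f (zs m) ≠ 0) (hzdf : ∀ m, gradC f (zs m) ≠ 0) :
    (∀ᶠ m in atTop, nμ (zs m) ≠ 0) ∧
    Tendsto
      (fun m => ‖nμ (zs m)‖⁻¹ • nμ (zs m)
        - ‖g (zs m) • gradC f (zs m)‖⁻¹ • ((μ * g (zs m)) • conjVec (gradC f (zs m))))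
      atTop (nhds 0) := by
  have hθ0 := hθ.1
  have hθ1 := hθ.2
  -- basic continuity facts
  have hfc : Tendsto (fun m => f (zs m)) atTop (nhds 0) := by
    have := ((hf.differentiableAt (hU.mem_nhds hx₀)).continuousAt).tendsto.comp hzs
    rwa [hfx₀] at this
  have hgc : Tendsto (fun m => g (zs m)) atTop (nhds (g x₀)) :=
    ((hg.differentiableAt (hU.mem_nhds hx₀)).continuousAt).tendsto.comp hzs
  set G : ℝ := ‖g x₀‖ with hGdef
  have hG : 0 < G := norm_pos_iff.mpr hgx₀
  -- gradient bound for g near x₀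
  obtain ⟨r, M, hr, hM, hMb⟩ := grad_bound hU hg hx₀
  set K : ℝ := 2 * M / (c * G) with hKdef
  have hK0 : 0 ≤ K := by positivity
  set ρ : ℕ → ℝ := fun m => K * ‖f (zs m)‖ ^ (1 - θ) with hρdef
  have hρ0 : ∀ m, 0 ≤ ρ m := fun m => by
    have : (0:ℝ) ≤ ‖f (zs m)‖ ^ (1 - θ) := Real.rpow_nonneg (norm_nonneg _) _
    positivity
  -- ρ → 0
  have hρ : Tendsto ρ atTop (nhds 0) := by
    have t2 : Tendsto (fun x : ℝ => x ^ (1 - θ)) (nhds 0) (nhds 0) := by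
      have := (Real.continuousAt_rpow_const 0 (1 - θ) (Or.inr (by linarith))).tendsto
      rwa [Real.zero_rpow (by linarith : (1:ℝ) - θ ≠ 0)] at this
    have hfn : Tendsto (fun m => ‖f (zs m)‖) atTop (nhds 0) := by simpa using hfc.norm
    have := (t2.comp hfn).const_mul K
    simpa using this
  -- abbreviations
  set a : ℕ → Cn n := fun m => (μ * g (zs m)) • conjVec (gradC f (zs m)) with hadef
  set b : ℕ → Cn n := fun m => ((starRingEnd ℂ μ) * f (zs m)) • conjVec (gradC g (zs m)) with hbdef
  have hna : ∀ m, ‖a m‖ = ‖g (zs m)‖ * ‖gradC f (zs m)‖ := by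
    intro m
    rw [hadef]
    simp [norm_smul, conjVec_norm, hμ]
  have hnb : ∀ m, ‖b m‖ = ‖f (zs m)‖ * ‖gradC g (zs m)‖ := by
    intro m
    rw [hbdef]
    simp [norm_smul, conjVec_norm, hμ]
  -- eventual facts
  have hWm : ∀ᶠ m in atTop, zs m ∈ W := hzs.eventually_mem hW
  have hrm : ∀ᶠ m in atTop, zs m ∈ Metric.ball x₀ r :=
    hzs.eventually_mem (Metric.ball_mem_nhds x₀ hr)
  have hg2 : ∀ᶠ m in atTop, G / 2 ≤ ‖g (zs m)‖ :=
    hgc.norm.eventually (eventually_ge_nhds (by linarith))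
  have hρsmall : ∀ᶠ m in atTop, ρ m ≤ 1 / 2 :=
    hρ.eventually (eventually_le_nhds (by norm_num))
  -- the key eventual statement
  have hkey : ∀ᶠ m in atTop, nμ (zs m) ≠ 0 ∧
      ‖(fun m => ‖nμ (zs m)‖⁻¹ • nμ (zs m)
        - ‖g (zs m) • gradC f (zs m)‖⁻¹ • ((μ * g (zs m)) • conjVec (gradC f (zs m)))) m‖
        ≤ 4 * ρ m := by
    filter_upwards [hWm, hrm, hg2, hρsmall] with m hm1 hm2 hm3 hm4
    have hfpos : 0 < ‖f (zs m)‖ := norm_pos_iff.mpr (hzf m)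
    have hdfpos : 0 < ‖gradC f (zs m)‖ := norm_pos_iff.mpr (hzdf m)
    have hgpos : 0 < ‖g (zs m)‖ := lt_of_lt_of_le (by positivity) hm3
    have hapos : 0 < ‖a m‖ := by rw [hna m]; positivity
    have hane : a m ≠ 0 := norm_pos_iff.mp hapos
    -- ‖b m‖ ≤ ρ m * ‖a m‖
    have hble : ‖b m‖ ≤ ρ m * ‖a m‖ := by
      have hsplit : ‖f (zs m)‖ = ‖f (zs m)‖ ^ θ * ‖f (zs m)‖ ^ (1 - θ) := by
        rw [← Real.rpow_add hfpos]
        norm_num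
      have hLoja := hloja (zs m) hm1
      have hgradg : ‖gradC g (zs m)‖ ≤ M := hMb (zs m) hm2
      rw [hnb m, hna m]
      rw [hρdef]
      have hpθ : 0 < ‖f (zs m)‖ ^ θ := Real.rpow_pos_of_pos hfpos θ
      have hp1 : 0 < ‖f (zs m)‖ ^ (1 - θ) := Real.rpow_pos_of_pos hfpos _
      have hKeq : M * (‖f (zs m)‖ ^ (1 - θ) * ‖f (zs m)‖ ^ θ)
          = K * ‖f (zs m)‖ ^ (1 - θ) * (G / 2 * (c * ‖f (zs m)‖ ^ θ)) := by
        rw [hKdef]; field_simp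
      have hstep : G / 2 * (c * ‖f (zs m)‖ ^ θ) ≤ ‖g (zs m)‖ * ‖gradC f (zs m)‖ :=
        mul_le_mul hm3 hLoja (by positivity) hgpos.le
      calc ‖f (zs m)‖ * ‖gradC g (zs m)‖
          ≤ ‖f (zs m)‖ * M := mul_le_mul_of_nonneg_left hgradg hfpos.le
        _ = ‖f (zs m)‖ ^ θ * ‖f (zs m)‖ ^ (1 - θ) * M := by rw [← hsplit]
        _ = M * (‖f (zs m)‖ ^ (1 - θ) * ‖f (zs m)‖ ^ θ) := by ring
        _ = K * ‖f (zs m)‖ ^ (1 - θ) * (G / 2 * (c * ‖f (zs m)‖ ^ θ)) := hKeq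
        _ ≤ K * ‖f (zs m)‖ ^ (1 - θ) * (‖g (zs m)‖ * ‖gradC f (zs m)‖) :=
            mul_le_mul_of_nonneg_left hstep (mul_nonneg hK0 hp1.le)
    have hbhalf : ‖b m‖ ≤ ‖a m‖ / 2 := by
      calc ‖b m‖ ≤ ρ m * ‖a m‖ := hble
        _ ≤ (1/2) * ‖a m‖ := mul_le_mul_of_nonneg_right hm4 hapos.le
        _ = ‖a m‖ / 2 := by ring
    have hu_lb : ‖a m‖ / 2 ≤ ‖a m + b m‖ := by
      have h1 : ‖a m‖ ≤ ‖a m + b m‖ + ‖b m‖ := by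
        calc ‖a m‖ = ‖(a m + b m) + (-b m)‖ := by rw [add_neg_cancel_right]
          _ ≤ ‖a m + b m‖ + ‖-b m‖ := norm_add_le _ _
          _ = ‖a m + b m‖ + ‖b m‖ := by rw [norm_neg]
      linarith
    have hupos : 0 < ‖a m + b m‖ := lt_of_lt_of_le (by positivity) hu_lb
    have hune : a m + b m ≠ 0 := norm_pos_iff.mp hupos
    have hnμm : nμ (zs m) = a m + b m := hnμ (zs m)
    constructor
    · rw [hnμm]; exact hune
    · have hnormeq : ‖g (zs m) • gradC f (zs m)‖ = ‖a m‖ := by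
        rw [hna m, norm_smul]
      simp only [hnμm, hnormeq]
      calc ‖‖a m + b m‖⁻¹ • (a m + b m) - ‖a m‖⁻¹ • a m‖
          ≤ 2 * ‖b m‖ / ‖a m + b m‖ := dir_bound (a m) (b m) hane hune
        _ ≤ 2 * (ρ m * ‖a m‖) / (‖a m‖ / 2) := by
            apply div_le_div₀ (by positivity) (by linarith) (by positivity) hu_lb
        _ = 4 * ρ m := by field_simp; ring
  constructor
  · exact hkey.mono fun m hm => hm.1
  · apply squeeze_zero_norm' (hkey.mono fun m hm => hm.2)
    have := hρ.const_mul (4:ℝ)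
    simpa using this
end
end

section
/- Let f, g be holomorphic on an open set U ⊆ ℂⁿ and let F(z) = f(z)·conj(g(z)). Then for every z ∈ U, the normal space to the fibre of F at z — the orthogonal complement, with respect to the real inner product ⟨v,w⟩_ℝ = Re Σ_k v_k·conj(w_k), of the kernel of fderiv ℝ F z in ℂⁿ — equals the set {μ·g(z)·conj(∇f(z)) + conj(μ)·f(z)·conj(∇g(z)) : μ ∈ ℂ}. In particular this set of normal vectors is a real 2-plane whenever fderiv ℝ F z is surjective, but it need not be a complex line. (Formula (3.2), the instance of Lemma 2.1 for mixed functions of type f·ḡ.) -/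
open Complex Filter Function Metric

noncomputable section

/-- Real inner product `⟨v,w⟩_ℝ = Re Σ_k v_k·conj(w_k)` on `ℂⁿ ≅ ℝ^{2n}`. -/
def realInnerC {n : ℕ} (v w : Cn n) : ℝ := (∑ k : Fin n, v k * (starRingEnd ℂ) (w k)).re

lemma realInnerC_eq_inner {n : ℕ} (v w : Cn n) : realInnerC v w = inner (𝕜 := ℝ) w v := by
  simp only [realInnerC, PiLp.inner_apply, Complex.inner, ← Complex.re_sum]

lemma realInnerC_sub {n : ℕ} (x y u : Cn n) :
    realInnerC (x - y) u = realInnerC x u - realInnerC y u := by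
  simp [realInnerC, sub_mul, Finset.sum_sub_distrib]

lemma clm_apply_sum {n : ℕ} (L : Cn n →L[ℂ] ℂ) (u : Cn n) :
    L u = ∑ k, u k * L (EuclideanSpace.single k 1) := by
  have h : u = ∑ k, u k • EuclideanSpace.single k (1:ℂ) := by
    ext j
    rw [WithLp.ofLp_sum, Finset.sum_apply]
    simp [EuclideanSpace.single_apply]
  conv_lhs => rw [h]
  simp [smul_eq_mul]

/-- **Formula (3.2)** (Lemma 2.1 for mixed functions of type `f·ḡ`).  For `f, g`
holomorphic on an open `U ⊆ ℂⁿ` and `F = f·ḡ`, the normal space to the fibre of `F` at any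
`z ∈ U` — the orthogonal complement, for the real inner product, of the kernel of
`fderiv ℝ F z` — is the set of vectors
`n_μ = μ·g(z)·conj(∇f(z)) + conj(μ)·f(z)·conj(∇g(z))`, `μ ∈ ℂ`. -/
theorem normal_space_fgbar
    {n : ℕ} (U : Set (Cn n)) (hU : IsOpen U)
    (f g : Cn n → ℂ) (hf : DifferentiableOn ℂ f U) (hg : DifferentiableOn ℂ g U)
    (F : Cn n → ℂ) (hF : ∀ z, F z = f z * starRingEnd ℂ (g z))
    (z : Cn n) (hz : z ∈ U) :
    {v : Cn n | ∀ u : Cn n, fderiv ℝ F z u = 0 → realInnerC v u = 0}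
      = {v : Cn n | ∃ μ : ℂ,
          v = (μ * g z) • conjVec (gradC f z)
            + ((starRingEnd ℂ μ) * f z) • conjVec (gradC g z)} := by
  have hfz : DifferentiableAt ℂ f z := (hf z hz).differentiableAt (hU.mem_nhds hz)
  have hgz : DifferentiableAt ℂ g z := (hg z hz).differentiableAt (hU.mem_nhds hz)
  set Df := fderiv ℂ f z with hDfdef
  set Dg := fderiv ℂ g z with hDgdef
  set D := fderiv ℝ F z with hDdef
  -- derivative formula
  have hD : ∀ u : Cn n, D u = f z * (starRingEnd ℂ) (Dg u) + (starRingEnd ℂ) (g z) * Df u := by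
    intro u
    have hc : HasFDerivAt f (Df.restrictScalars ℝ) z := hfz.hasFDerivAt.restrictScalars ℝ
    have hgR : HasFDerivAt g (Dg.restrictScalars ℝ) z := hgz.hasFDerivAt.restrictScalars ℝ
    have hd : HasFDerivAt (fun w => (starRingEnd ℂ) (g w))
        ((Complex.conjCLE : ℂ ≃L[ℝ] ℂ).toContinuousLinearMap.comp (Dg.restrictScalars ℝ)) z :=
      (Complex.conjCLE.toContinuousLinearMap.hasFDerivAt).comp z hgR
    have hFz : HasFDerivAt F
        (f z • ((Complex.conjCLE : ℂ ≃L[ℝ] ℂ).toContinuousLinearMap.comp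
          (Dg.restrictScalars ℝ)) + ((starRingEnd ℂ) (g z)) • (Df.restrictScalars ℝ)) z := by
      have hFe : F = fun w => f w * (starRingEnd ℂ) (g w) := funext hF
      rw [hFe]
      exact hc.mul hd
    rw [hDdef, hFz.fderiv]
    simp
  -- the (real-linear) map μ ↦ n_μ
  set T : ℂ →ₗ[ℝ] Cn n :=
    { toFun := fun μ => (μ * g z) • conjVec (gradC f z)
        + ((starRingEnd ℂ) μ * f z) • conjVec (gradC g z)
      map_add' := by
        intro a b
        ext k
        simp [conjVec, add_mul]
        ring
      map_smul' := by
        intro r a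
        ext k
        simp [conjVec, Complex.real_smul]
        ring } with hTdef
  -- key inner product identity
  have hkey : ∀ (μ : ℂ) (u : Cn n),
      realInnerC (T μ) u = ((starRingEnd ℂ) μ * D u).re := by
    intro μ u
    have hA : Df u = ∑ k, u k * gradC f z k := clm_apply_sum Df u
    have hB : Dg u = ∑ k, u k * gradC g z k := clm_apply_sum Dg u
    have e1 : (∑ k, (T μ) k * (starRingEnd ℂ) (u k))
        = (μ * g z) * (starRingEnd ℂ) (Df u)
          + ((starRingEnd ℂ) μ * f z) * (starRingEnd ℂ) (Dg u) := by
      rw [hA, hB]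
      simp only [hTdef, LinearMap.coe_mk, AddHom.coe_mk, PiLp.add_apply, PiLp.smul_apply,
        smul_eq_mul, conjVec, PiLp.toLp_apply, map_sum, map_mul, Finset.mul_sum, ← Finset.sum_add_distrib]
      apply Finset.sum_congr rfl
      intro k _
      ring
    have h1 : ((μ * g z) * (starRingEnd ℂ) (Df u)).re
        = ((starRingEnd ℂ) μ * (starRingEnd ℂ) (g z) * Df u).re := by
      rw [← Complex.conj_re ((μ * g z) * (starRingEnd ℂ) (Df u))]
      congr 1
      simp only [map_mul, Complex.conj_conj]
    have h2 : (((starRingEnd ℂ) μ * f z) * (starRingEnd ℂ) (Dg u)).re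
        = ((starRingEnd ℂ) μ * (f z * (starRingEnd ℂ) (Dg u))).re := by
      rw [mul_assoc]
    rw [realInnerC, e1, Complex.add_re, h1, h2, hD u, mul_add, Complex.add_re,
      ← mul_assoc ((starRingEnd ℂ) μ) ((starRingEnd ℂ) (g z)) (Df u)]
    exact add_comm _ _
  ext v
  simp only [Set.mem_setOf_eq]
  constructor
  · intro hv
    set W : Submodule ℝ (Cn n) := LinearMap.range T with hWdef
    obtain ⟨w, hw, w', hw', hvw⟩ := W.exists_add_mem_mem_orthogonal v
    obtain ⟨μ, hμ⟩ := hw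
    have hDw' : D w' = 0 := by
      have hmem : T (D w') ∈ W := ⟨D w', rfl⟩
      have h0 : inner (𝕜 := ℝ) (T (D w')) w' = 0 := hw' _ hmem
      have h1 : realInnerC (T (D w')) w' = 0 := by
        rw [realInnerC_eq_inner, real_inner_comm]; exact h0
      rw [hkey] at h1
      have h2 : Complex.normSq (D w') = 0 := by
        rw [mul_comm, Complex.mul_conj] at h1
        simpa using h1
      exact Complex.normSq_eq_zero.mp h2
    have hv1 : realInnerC v w' = 0 := hv w' hDw'
    have hv2 : realInnerC (T μ) w' = 0 := by
      rw [hkey, hDw', mul_zero, Complex.zero_re]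
    have hw'0 : w' = 0 := by
      have : realInnerC w' w' = 0 := by
        have hsub : w' = v - T μ := by rw [hvw, hμ]; abel
        nth_rewrite 1 [hsub]
        rw [realInnerC_sub, hv1, hv2, sub_zero]
      rw [realInnerC_eq_inner] at this
      exact inner_self_eq_zero.mp this
    refine ⟨μ, ?_⟩
    rw [hvw, hw'0, add_zero, ← hμ]
    rfl
  · rintro ⟨μ, rfl⟩ u hu
    have : realInnerC (T μ) u = 0 := by
      rw [hkey, hu, mul_zero, Complex.zero_re]
    exact this
end
end

section
/- Let f, g be holomorphic on an open set U ⊆ ℂⁿ, let F(z) = f(z)·conj(g(z)) and V = F⁻¹(0) = f⁻¹(0) ∪ g⁻¹(0). Then Sing F \ V ⊆ Sing(f,g) \ V: every point z with f(z)·g(z) ≠ 0 at which fderiv ℝ F z is not surjective is a point where ∇f(z) and ∇g(z) are ℂ-linearly dependent. (Lemma 2.4(1).) -/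
open Complex Filter Function Metric

noncomputable section

/-- Two vectors of `ℂⁿ` are `ℂ`-linearly dependent. -/
def LinDepC {n : ℕ} (v w : Cn n) : Prop :=
  ∃ a b : ℂ, (a, b) ≠ (0, 0) ∧ a • v + b • w = 0

/-- **Lemma 2.4(1).**  For `f, g` holomorphic on an open `U ⊆ ℂⁿ`, `F = f·ḡ` and
`V = F⁻¹(0)`, one has `Sing F \ V ⊆ Sing(f,g) \ V`:  at every point `z ∈ U` with
`f(z)·g(z) ≠ 0` where `fderiv ℝ F z` is not surjective, the gradients `∇f(z)` and `∇g(z)`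
are `ℂ`-linearly dependent. -/
theorem sing_fgbar_off_V_subset_sing_pair
    {n : ℕ} (U : Set (Cn n)) (hU : IsOpen U)
    (f g : Cn n → ℂ) (hf : DifferentiableOn ℂ f U) (hg : DifferentiableOn ℂ g U)
    (F : Cn n → ℂ) (hF : ∀ z, F z = f z * starRingEnd ℂ (g z))
    (z : Cn n) (hz : z ∈ U) (hzV : f z * g z ≠ 0)
    (hsing : ¬ Surjective ⇑(fderiv ℝ F z)) :
    LinDepC (gradC f z) (gradC g z) := by
  by_contra hdep
  have hfz : f z ≠ 0 := fun h => hzV (by simp [h])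
  have hgz : g z ≠ 0 := fun h => hzV (by simp [h])
  set φ := fderiv ℂ f z with hφ
  set ψ := fderiv ℂ g z with hψ
  -- step 1 : find v with ψ v = 0, φ v = 1
  have hgrad : gradC g z ≠ 0 := by
    intro h
    exact hdep ⟨0, 1, by simp, by simp [h]⟩
  obtain ⟨k, hk⟩ : ∃ k, ψ (EuclideanSpace.single k 1) ≠ 0 := by
    by_contra h
    push_neg at h
    exact hgrad (PiLp.ext fun k => h k)
  have hv : ∃ v : Cn n, ψ v = 0 ∧ φ v = 1 := by
    by_contra h1
    push_neg at h1
    have hker : ∀ v, ψ v = 0 → φ v = 0 := by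
      intro v hv0
      by_contra hφv
      refine h1 ((φ v)⁻¹ • v) (by simp [map_smul, hv0]) ?_
      simp [map_smul, smul_eq_mul, inv_mul_cancel₀ hφv]
    set u : Cn n := EuclideanSpace.single k 1 with hu
    set a : ℂ := φ u / ψ u with ha
    have key : ∀ v, φ v = a * ψ v := by
      intro v
      have h0 : ψ (v - (ψ v / ψ u) • u) = 0 := by
        simp [map_sub, map_smul, smul_eq_mul, div_mul_cancel₀ _ hk]
      have := hker _ h0
      rw [map_sub, map_smul, sub_eq_zero] at this
      rw [this, ha, smul_eq_mul]
      field_simp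
    refine hdep ⟨1, -a, by simp, PiLp.ext fun j => ?_⟩
    have := key (EuclideanSpace.single j 1)
    simp only [gradC, ← hφ, ← hψ]
    show (1 : ℂ) • φ (EuclideanSpace.single j 1) + (-a) • ψ (EuclideanSpace.single j 1) = 0
    rw [this]; simp only [smul_eq_mul]; ring
  obtain ⟨v, hvψ, hvφ⟩ := hv
  -- step 2 : compute the real derivative of F and show surjectivity
  apply hsing
  have hfd : HasFDerivAt f φ z := (hf.differentiableAt (hU.mem_nhds hz)).hasFDerivAt
  have hgd : HasFDerivAt g ψ z := (hg.differentiableAt (hU.mem_nhds hz)).hasFDerivAt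
  have hconj : HasFDerivAt (fun w => (starRingEnd ℂ) (g w))
      ((Complex.conjCLE.toContinuousLinearMap).comp (ψ.restrictScalars ℝ)) z := by
    exact (Complex.conjCLE.hasFDerivAt.comp z (hgd.restrictScalars ℝ))
  have hFd : HasFDerivAt F
      (f z • ((Complex.conjCLE.toContinuousLinearMap).comp (ψ.restrictScalars ℝ))
        + (starRingEnd ℂ) (g z) • (φ.restrictScalars ℝ)) z := by
    have := (hfd.restrictScalars ℝ).mul hconj
    have hFe : F = fun y => f y * (starRingEnd ℂ) (g y) := funext hF
    rw [hFe]
    exact this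
  rw [hFd.fderiv]
  set L := f z • ((Complex.conjCLE.toContinuousLinearMap).comp (ψ.restrictScalars ℝ))
        + (starRingEnd ℂ) (g z) • (φ.restrictScalars ℝ) with hL
  have hLv : L v = (starRingEnd ℂ) (g z) := by
    simp [hL, hvψ, hvφ, smul_eq_mul]
  have hLiv : L (Complex.I • v) = Complex.I * (starRingEnd ℂ) (g z) := by
    have h1 : ψ (Complex.I • v) = 0 := by rw [map_smul, hvψ, smul_zero]
    have h2 : φ (Complex.I • v) = Complex.I := by rw [map_smul, hvφ, smul_eq_mul, mul_one]
    simp [hL, h1, h2, smul_eq_mul, mul_comm]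
  intro c
  set w := (c / (starRingEnd ℂ) (g z)).re • v + (c / (starRingEnd ℂ) (g z)).im • (Complex.I • v) with hw
  refine ⟨w, ?_⟩
  have hgz' : (starRingEnd ℂ) (g z) ≠ 0 := by simpa using hgz
  rw [hw, map_add, map_smul, map_smul, hLv, hLiv, real_smul, real_smul]
  rw [show ((((c / (starRingEnd ℂ) (g z)).re : ℂ)) * (starRingEnd ℂ) (g z)
      + (((c / (starRingEnd ℂ) (g z)).im : ℂ)) * (Complex.I * (starRingEnd ℂ) (g z))
      = (((c / (starRingEnd ℂ) (g z)).re : ℂ) + ((c / (starRingEnd ℂ) (g z)).im : ℂ) * Complex.I)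
        * (starRingEnd ℂ) (g z)) from by ring]
  rw [Complex.re_add_im, div_mul_cancel₀ c hgz']
end
end

section
/- Let f, g be holomorphic on an open set U ⊆ ℂⁿ, let F(z) = f(z)·conj(g(z)) and V = F⁻¹(0) = f⁻¹(0) ∪ g⁻¹(0). Then Sing F ∩ V = {z : f(z) = 0 and g(z) = 0} ∪ {z : f(z) = 0 and ∇f(z) = 0} ∪ {z : g(z) = 0 and ∇g(z) = 0}; that is, within V the singular set of F consists exactly of the common zero set {f = g = 0} together with the singular points of f lying on {f = 0} and the singular points of g lying on {g = 0}. (Lemma 2.4(2).) -/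
open Complex Filter Function Metric

noncomputable section

lemma clm_eq_zero_iff {n : ℕ} (L : Cn n →L[ℂ] ℂ) :
    (∀ k, L (EuclideanSpace.single k 1) = 0) ↔ L = 0 := by
  constructor
  · intro h
    ext v
    have : L.toLinearMap = (0 : Cn n →ₗ[ℂ] ℂ) := by
      apply Module.Basis.ext (EuclideanSpace.basisFun (Fin n) ℂ).toBasis
      intro i
      simpa using h i
    simpa using congrFun (congrArg (fun (M : Cn n →ₗ[ℂ] ℂ) => (M : Cn n → ℂ)) this) v
  · intro h k; simp [h]

lemma gradC_eq_zero_iff {n : ℕ} (f : Cn n → ℂ) (z : Cn n) :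
    gradC f z = 0 ↔ fderiv ℂ f z = 0 := by
  rw [← clm_eq_zero_iff]
  constructor
  · intro h k; have := congrArg (fun x : Cn n => x k) h; simpa [gradC] using this
  · intro h; ext k; simpa [gradC] using h k

lemma surj_mul_clm {n : ℕ} (c : ℂ) (hc : c ≠ 0) (L : Cn n →L[ℂ] ℂ) (hL : L ≠ 0) :
    Surjective (fun v => c * L v) := by
  obtain ⟨v, hv⟩ : ∃ v, L v ≠ 0 := by
    by_contra h
    push_neg at h
    exact hL (by ext w; simpa using h w)
  intro w
  refine ⟨(w / (c * L v)) • v, ?_⟩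
  have hcv : c * L v ≠ 0 := mul_ne_zero hc hv
  simp only [map_smul, smul_eq_mul]
  field_simp

lemma surj_mul_conj_clm {n : ℕ} (c : ℂ) (hc : c ≠ 0) (L : Cn n →L[ℂ] ℂ) (hL : L ≠ 0) :
    Surjective (fun v => c * starRingEnd ℂ (L v)) := by
  obtain ⟨v, hv⟩ : ∃ v, L v ≠ 0 := by
    by_contra h
    push_neg at h
    exact hL (by ext w; simpa using h w)
  intro w
  refine ⟨(starRingEnd ℂ (w / (c * starRingEnd ℂ (L v)))) • v, ?_⟩
  have hcv : c * starRingEnd ℂ (L v) ≠ 0 := mul_ne_zero hc (by simpa using hv)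
  simp only [map_smul, smul_eq_mul, map_mul, Complex.conj_conj]
  field_simp
  ring_nf; exact mul_inv_cancel_right₀ (by simpa using hv) w

lemma not_surj_zero {n : ℕ} : ¬ Surjective (fun _ : Cn n => (0 : ℂ)) := by
  intro h
  obtain ⟨v, hv⟩ := h 1
  simp at hv

/-- **Lemma 2.4(2).**  For `f, g` holomorphic on an open `U ⊆ ℂⁿ`, `F = f·ḡ` and
`V = F⁻¹(0) = f⁻¹(0) ∪ g⁻¹(0)`, one has
`Sing F ∩ V = {f = g = 0} ∪ (Sing f ∩ {f = 0}) ∪ (Sing g ∩ {g = 0})`: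
for `z ∈ U` lying in `V`, the derivative `fderiv ℝ F z` is not surjective exactly when
`f(z) = g(z) = 0`, or `f(z) = 0` and `∇f(z) = 0`, or `g(z) = 0` and `∇g(z) = 0`. -/
theorem sing_fgbar_on_V
    {n : ℕ} (U : Set (Cn n)) (hU : IsOpen U)
    (f g : Cn n → ℂ) (hf : DifferentiableOn ℂ f U) (hg : DifferentiableOn ℂ g U)
    (F : Cn n → ℂ) (hF : ∀ z, F z = f z * starRingEnd ℂ (g z))
    (z : Cn n) (hz : z ∈ U) (hzV : F z = 0) :
    ¬ Surjective ⇑(fderiv ℝ F z) ↔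
      (f z = 0 ∧ g z = 0) ∨ (f z = 0 ∧ gradC f z = 0) ∨ (g z = 0 ∧ gradC g z = 0) := by
  have hUz : U ∈ nhds z := hU.mem_nhds hz
  have hfz : DifferentiableAt ℂ f z := (hf z hz).differentiableAt hUz
  have hgz : DifferentiableAt ℂ g z := (hg z hz).differentiableAt hUz
  set A : Cn n →L[ℂ] ℂ := fderiv ℂ f z with hA
  set B : Cn n →L[ℂ] ℂ := fderiv ℂ g z with hB
  have hAr : HasFDerivAt f (A.restrictScalars ℝ) z := hfz.hasFDerivAt.restrictScalars ℝ
  have hBr : HasFDerivAt g (B.restrictScalars ℝ) z := hgz.hasFDerivAt.restrictScalars ℝ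
  set Cc : ℂ →L[ℝ] ℂ := Complex.conjCLE.toContinuousLinearMap with hCc
  have hconj : HasFDerivAt (fun w => starRingEnd ℂ (g w)) (Cc.comp (B.restrictScalars ℝ)) z := by
    have := Cc.hasFDerivAt.comp z hBr
    exact this
  set D : Cn n →L[ℝ] ℂ :=
      f z • (Cc.comp (B.restrictScalars ℝ)) + (starRingEnd ℂ (g z)) • (A.restrictScalars ℝ)
    with hD
  have hFD : HasFDerivAt F D z := by
    have hFeq : F = fun w => f w * starRingEnd ℂ (g w) := funext hF
    rw [hFeq]
    exact hAr.mul hconj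
  have hDapp : ∀ v, (fderiv ℝ F z) v =
      f z * starRingEnd ℂ (B v) + starRingEnd ℂ (g z) * A v := by
    intro v
    rw [hFD.fderiv]
    simp [hD, hCc, Complex.conjCLE_apply, smul_eq_mul]
  -- f z = 0 ∨ g z = 0
  have hor : f z = 0 ∨ g z = 0 := by
    rcases mul_eq_zero.1 ((hF z) ▸ hzV) with h | h
    · exact Or.inl h
    · exact Or.inr (by simpa using h)
  by_cases hf0 : f z = 0
  · by_cases hg0 : g z = 0
    · -- both zero: derivative is zero, not surjective
      have hzero : ⇑(fderiv ℝ F z) = fun _ => (0 : ℂ) := by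
        funext v; rw [hDapp v, hf0, hg0]; simp
      simp only [hzero]
      simp [not_surj_zero, hf0, hg0]
    · -- f z = 0, g z ≠ 0
      have happ : ⇑(fderiv ℝ F z) = fun v => starRingEnd ℂ (g z) * A v := by
        funext v; rw [hDapp v, hf0]; simp
      rw [happ]
      have hcg : starRingEnd ℂ (g z) ≠ 0 := by simpa using hg0
      constructor
      · intro hns
        have hA0 : A = 0 := by
          by_contra hA0
          exact hns (surj_mul_clm _ hcg A hA0)
        exact Or.inr (Or.inl ⟨hf0, (gradC_eq_zero_iff f z).2 hA0⟩)
      · rintro (⟨_, h⟩ | ⟨_, h⟩ | ⟨h, _⟩)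
        · exact absurd h hg0
        · have hA0 : A = 0 := (gradC_eq_zero_iff f z).1 h
          rw [hA0]
          simpa using not_surj_zero (n := n)
        · exact absurd h hg0
  · -- f z ≠ 0, so g z = 0
    have hg0 : g z = 0 := hor.resolve_left hf0
    have happ : ⇑(fderiv ℝ F z) = fun v => f z * starRingEnd ℂ (B v) := by
      funext v; rw [hDapp v, hg0]; simp
    rw [happ]
    constructor
    · intro hns
      have hB0 : B = 0 := by
        by_contra hB0
        exact hns (surj_mul_conj_clm _ hf0 B hB0)
      exact Or.inr (Or.inr ⟨hg0, (gradC_eq_zero_iff g z).2 hB0⟩)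
    · rintro (⟨h, _⟩ | ⟨h, _⟩ | ⟨_, h⟩)
      · exact absurd h hf0
      · exact absurd h hf0
      · have hB0 : B = 0 := (gradC_eq_zero_iff g z).1 h
        rw [hB0]
        simpa using not_surj_zero (n := n)
end
end
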